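/- Let b(x) = ((3x+1)/(x+3))² for real x, and let x_n = bⁿ(0) denote the n-th iterate of b at 0. Then there exist positive constants c and d such that n^{1/2}·(1 − x_n) → c and n^{3/2}·(x_{n+1} − x_n) → d as n → ∞. -/

import Mathlib

open Filter Topology

/-- Parabolic orbit asymptotics for `b(x) = ((3x+1)/(x+3))²`: with `x_n = bⁿ(0)`,
there are constants `c, d > 0` with `√n (1 − x_n) → c` and `n^{3/2}(x_{n+1} − x_n) → d`. -/
theorem blaschke_third_parabolic_asymptotics
    (b : ℝ → ℝ) (hb : ∀ x : ℝ, b x = ((3 * x + 1) / (x + 3)) ^ 2) :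
    ∃ c d : ℝ, 0 < c ∧ 0 < d ∧
      Tendsto (fun n : ℕ => (n : ℝ) ^ ((1 : ℝ)/2) * (1 - b^[n] 0)) atTop (nhds c) ∧
      Tendsto (fun n : ℕ => (n : ℝ) ^ ((3 : ℝ)/2) * (b^[n+1] 0 - b^[n] 0)) atTop (nhds d) := by
  obtain ⟨y, hydef⟩ : ∃ y : ℕ → ℝ, ∀ n, y n = 1 - b^[n] 0 := ⟨_, fun n => rfl⟩
  have hy0 : y 0 = 1 := by rw [hydef]; simp
  -- the basic step map identity
  have hstep : ∀ t : ℝ, 0 < t → t ≤ 1 → 1 - b (1 - t) = 8 * t * (2 - t) / (4 - t) ^ 2 := by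
    intro t ht0 ht1
    have h4 : (4 : ℝ) - t ≠ 0 := by nlinarith
    rw [hb]
    have h : (1 : ℝ) - t + 3 = 4 - t := by ring
    rw [h]
    field_simp [h]
    ring
  -- positivity and bound, with the recurrence, by induction
  have hbd : ∀ n, 0 < y n ∧ y n ≤ 1 := by
    intro n
    induction n with
    | zero => rw [hy0]; exact ⟨one_pos, le_refl 1⟩
    | succ n ih =>
      obtain ⟨h0, h1⟩ := ih
      have hrec : y (n + 1) = 8 * y n * (2 - y n) / (4 - y n) ^ 2 := by
        rw [hydef (n + 1), Function.iterate_succ_apply',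
          show b^[n] 0 = 1 - y n by rw [hydef n]; ring]
        exact hstep _ h0 h1
      rw [hrec]
      constructor
      · exact div_pos (by nlinarith) (by nlinarith)
      · rw [div_le_one (by nlinarith)]
        nlinarith
  have hrec : ∀ n, y (n + 1) = 8 * y n * (2 - y n) / (4 - y n) ^ 2 := by
    intro n
    rw [hydef (n + 1), Function.iterate_succ_apply',
      show b^[n] 0 = 1 - y n by rw [hydef n]; ring]
    exact hstep _ (hbd n).1 (hbd n).2
  have h4ne : ∀ n, (4 : ℝ) - y n ≠ 0 := fun n => by nlinarith [(hbd n).1, (hbd n).2]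
  have h2ne : ∀ n, (2 : ℝ) - y n ≠ 0 := fun n => by nlinarith [(hbd n).1, (hbd n).2]
  have hdiff : ∀ n, y n - y (n + 1) = (y n) ^ 3 / (4 - y n) ^ 2 := by
    intro n
    rw [hrec n]
    field_simp [h4ne n]
    ring
  have hanti : Antitone y := by
    apply antitone_nat_of_succ_le
    intro n
    rw [hrec n, div_le_iff₀ (by nlinarith [(hbd n).1, (hbd n).2])]
    nlinarith [(hbd n).1, (hbd n).2, pow_nonneg (hbd n).1.le 3]
  -- convergence to the infimum, which must be 0
  have hbdd : BddBelow (Set.range y) := ⟨0, fun x ⟨n, hn⟩ => hn ▸ (hbd n).1.le⟩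
  have hyL : Tendsto y atTop (𝓝 (⨅ n, y n)) := tendsto_atTop_ciInf hanti hbdd
  set L : ℝ := ⨅ n, y n with hL
  have hL0 : 0 ≤ L := le_ciInf fun n => (hbd n).1.le
  have hL1 : L ≤ 1 := le_trans (ciInf_le hbdd 0) (le_of_eq hy0)
  have h4L : (4 : ℝ) - L ≠ 0 := by nlinarith
  have hfix : 8 * L * (2 - L) / (4 - L) ^ 2 = L := by
    have h1 : Tendsto (fun n => y (n + 1)) atTop (𝓝 L) :=
      hyL.comp (tendsto_add_atTop_nat 1)
    have h2 : Tendsto (fun n => 8 * y n * (2 - y n) / (4 - y n) ^ 2) atTop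
        (𝓝 (8 * L * (2 - L) / (4 - L) ^ 2)) := by
      apply Tendsto.div
      · exact (tendsto_const_nhds.mul hyL).mul (tendsto_const_nhds.sub hyL)
      · exact (tendsto_const_nhds.sub hyL).pow 2
      · positivity
    exact tendsto_nhds_unique h2 (h1.congr fun n => hrec n)
  have hLzero : L = 0 := by
    have h1 : 8 * L * (2 - L) = L * (4 - L) ^ 2 := by
      field_simp at hfix
      linarith [hfix]
    have h3 : L ^ 3 = 0 := by nlinarith
    exact pow_eq_zero_iff (n := 3) (by norm_num) |>.mp h3
  have hyL0 : Tendsto y atTop (𝓝 0) := hLzero ▸ hyL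
  -- the auxiliary sequence z n = 1 / y n ^ 2
  obtain ⟨z, hzdef⟩ : ∃ z : ℕ → ℝ, ∀ n, z n = ((y n) ^ 2)⁻¹ := ⟨_, fun n => rfl⟩
  have halg : ∀ t : ℝ, t ≠ 0 → (2 : ℝ) - t ≠ 0 → (4 : ℝ) - t ≠ 0 →
      ((8 * t * (2 - t) / (4 - t) ^ 2) ^ 2)⁻¹ - (t ^ 2)⁻¹
        = (32 - 16 * t + t ^ 2) / (64 * (2 - t) ^ 2) := by
    intro t h0 h2 h4
    field_simp
    ring
  have hzdiff : ∀ n, z (n + 1) - z n = (32 - 16 * y n + (y n) ^ 2) / (64 * (2 - y n) ^ 2) := by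
    intro n
    rw [hzdef (n + 1), hzdef n, hrec n]
    exact halg (y n) (hbd n).1.ne' (h2ne n) (h4ne n)
  have hzlim : Tendsto (fun n => z (n + 1) - z n) atTop (𝓝 (1 / 8)) := by
    have hcA : ContinuousAt (fun t : ℝ => (32 - 16 * t + t ^ 2) / (64 * (2 - t) ^ 2)) 0 := by
      apply ContinuousAt.div
      · fun_prop
      · fun_prop
      · norm_num
    have hcont : Tendsto (fun t : ℝ => (32 - 16 * t + t ^ 2) / (64 * (2 - t) ^ 2)) (𝓝 0)
        (𝓝 (1/8)) := by
      have h18 : (32 - 16 * (0:ℝ) + 0 ^ 2) / (64 * (2 - 0) ^ 2) = 1/8 := by norm_num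
      exact h18 ▸ hcA.tendsto
    exact (hcont.comp hyL0).congr fun n => (hzdiff n).symm
  -- Cesàro: z n / n → 1/8
  have hzn : Tendsto (fun n : ℕ => z n / n) atTop (𝓝 (1 / 8)) := by
    have hc := hzlim.cesaro
    have hsum : ∀ n, z n = z 0 + ∑ i ∈ Finset.range n, (z (i + 1) - z i) := by
      intro n
      rw [Finset.sum_range_sub]
      ring
    have h0 : Tendsto (fun n : ℕ => z 0 / n) atTop (𝓝 0) :=
      tendsto_const_nhds.div_atTop tendsto_natCast_atTop_atTop
    have hadd := h0.add hc
    rw [zero_add] at hadd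
    refine hadd.congr fun n => ?_
    rw [hsum n]
    ring
  -- hence n / z n → 8 and √n * y n → √8
  have hnz : Tendsto (fun n : ℕ => (n : ℝ) / z n) atTop (𝓝 8) := by
    have h8 : ((1:ℝ)/8)⁻¹ = 8 := by norm_num
    have hi := hzn.inv₀ (by norm_num)
    rw [h8] at hi
    refine hi.congr fun n => ?_
    rw [inv_div]
  have hsqrt : Tendsto (fun n : ℕ => Real.sqrt ((n : ℝ) / z n)) atTop (𝓝 (Real.sqrt 8)) :=
    (Real.continuous_sqrt.tendsto 8).comp hnz
  have hkey : ∀ n : ℕ, Real.sqrt ((n : ℝ) / z n) = (n : ℝ) ^ ((1 : ℝ)/2) * y n := by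
    intro n
    have hyn : 0 < y n := (hbd n).1
    have h1 : (n : ℝ) / z n = (n : ℝ) * (y n) ^ 2 := by
      rw [hzdef n, div_eq_mul_inv, inv_inv]
    rw [h1, Real.sqrt_mul (Nat.cast_nonneg n), Real.sqrt_sq hyn.le, Real.sqrt_eq_rpow]
  have hfirst : Tendsto (fun n : ℕ => (n : ℝ) ^ ((1 : ℝ)/2) * (1 - b^[n] 0)) atTop
      (𝓝 (Real.sqrt 8)) := by
    refine (hsqrt.congr fun n => ?_)
    rw [hkey n, hydef n]
  refine ⟨Real.sqrt 8, Real.sqrt 8 ^ 3 / 16, Real.sqrt_pos.mpr (by norm_num), by positivity,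
    hfirst, ?_⟩
  -- second limit
  have hden : Tendsto (fun n => (4 - y n) ^ 2) atTop (𝓝 16) := by
    have h16 : ((4:ℝ) - 0) ^ 2 = 16 := by norm_num
    rw [← h16]
    exact (tendsto_const_nhds.sub hyL0).pow 2
  have hfirst' : Tendsto (fun n : ℕ => (n : ℝ) ^ ((1 : ℝ)/2) * y n) atTop
      (𝓝 (Real.sqrt 8)) := by
    refine hfirst.congr fun n => ?_
    rw [hydef n]
  have hmain : Tendsto (fun n : ℕ => ((n : ℝ) ^ ((1 : ℝ)/2) * y n) ^ 3 / (4 - y n) ^ 2) atTop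
      (𝓝 (Real.sqrt 8 ^ 3 / 16)) :=
    Tendsto.div (hfirst'.pow 3) hden (by norm_num)
  refine hmain.congr fun n => ?_
  have hxy : b^[n+1] 0 - b^[n] 0 = (y n) ^ 3 / (4 - y n) ^ 2 := by
    have h := hdiff n
    rw [show b^[n+1] 0 = 1 - y (n+1) by rw [hydef]; ring,
      show b^[n] 0 = 1 - y n by rw [hydef]; ring]
    linarith
  rw [hxy]
  have hpow : ((n : ℝ) ^ ((1 : ℝ)/2)) ^ 3 = (n : ℝ) ^ ((3 : ℝ)/2) := by
    rw [← Real.rpow_natCast ((n : ℝ) ^ ((1:ℝ)/2)) 3, ← Real.rpow_mul (Nat.cast_nonneg n)]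
    norm_num
  rw [mul_pow, hpow]
  ring
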